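/- Suppose y^b is a minimal monomial generator of E_q^{(2)} and let D = {A ⊆ [q] : A nonempty, b_A = 0}. Then D is closed under unions; in particular, if D is nonempty it has a maximum element with respect to inclusion. -/

import Mathlib

set_option linter.unusedSectionVars false
set_option maxHeartbeats 1000000

open MvPolynomial

/-- Index type: nonempty subsets of `[q]`. -/
abbrev EIdx (q : ℕ) := {A : Finset (Fin q) // A.Nonempty}

/-- The generator `ε_i = ∏_{A ∋ i} y_A` of the extremal ideal. -/
noncomputable def extGen (k : Type*) [Field k] (q : ℕ) (i : Fin q) :
    MvPolynomial (EIdx q) k :=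
  ∏ A : EIdx q, if i ∈ A.1 then X A else 1

/-- The `q`-extremal ideal `E_q = (ε_1, …, ε_q)`. -/
noncomputable def extIdeal (k : Type*) [Field k] (q : ℕ) :
    Ideal (MvPolynomial (EIdx q) k) :=
  Ideal.span (Set.range (extGen k q))

/-- The `r`-th symbolic power of a square-free monomial ideal: the intersection
of the `r`-th powers of its minimal primes. -/
def symbPow {R : Type*} [CommRing R] (I : Ideal R) (r : ℕ) : Ideal R :=
  ⨅ P ∈ I.minimalPrimes, P ^ r

/-- The monomial `y^b = ∏_{∅ ≠ A ⊆ [q]} y_A^{b_A}`. -/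
noncomputable def ymonF (k : Type*) [Field k] (q : ℕ)
    (b : Finset (Fin q) → ℕ) : MvPolynomial (EIdx q) k :=
  ∏ A : EIdx q, X A ^ b A.1

/-- A minimal set cover of `[q]`: a collection of nonempty subsets whose union is
`[q]`, with no member contained in the union of the others. -/
def IsMinSetCover (q : ℕ) (C : Finset (Finset (Fin q))) : Prop :=
  (∀ A ∈ C, A.Nonempty) ∧ C.sup id = Finset.univ ∧
    ∀ A ∈ C, ¬ A ⊆ (C.erase A).sup id

section Aux

variable {k : Type*} [Field k] {σ : Type*} [Fintype σ]

/-- The ideal generated by a finite set of variables. -/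
noncomputable def varIdeal (T : Finset σ) : Ideal (MvPolynomial σ k) :=
  Ideal.span (X '' (T : Set σ))

lemma sub_aeval_mem (T : Finset σ) [DecidableEq σ] (f : MvPolynomial σ k) :
    f - aeval (fun A => if A ∈ T then (0 : MvPolynomial σ k) else X A) f
      ∈ varIdeal (k := k) T := by
  induction f using MvPolynomial.induction_on with
  | C a => simp [aeval_C, algebraMap_eq]
  | add p q hp hq =>
      have := Ideal.add_mem _ hp hq
      simpa [map_add, sub_add_sub_comm] using this
  | mul_X p n hp =>
      rw [map_mul, aeval_X]
      by_cases hn : n ∈ T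
      · rw [if_pos hn, mul_zero, sub_zero]
        exact Ideal.mul_mem_left _ _ (Ideal.subset_span ⟨n, by simpa using hn, rfl⟩)
      · rw [if_neg hn]
        have : p * X n - aeval (fun A => if A ∈ T then (0 : MvPolynomial σ k) else X A) p * X n
            = (p - aeval (fun A => if A ∈ T then (0 : MvPolynomial σ k) else X A) p) * X n := by
          ring
        rw [this]
        exact Ideal.mul_mem_right _ _ hp

lemma varIdeal_isPrime (T : Finset σ) : (varIdeal (k := k) T).IsPrime := by
  classical
  have hker : varIdeal (k := k) T =
      RingHom.ker (aeval (fun A => if A ∈ T then (0 : MvPolynomial σ k) else X A)).toRingHom := by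
    apply le_antisymm
    · rw [varIdeal, Ideal.span_le]
      rintro _ ⟨A, hA, rfl⟩
      simp only [SetLike.mem_coe, RingHom.mem_ker, AlgHom.toRingHom_eq_coe,
        RingHom.coe_coe, aeval_X]
      rw [if_pos (by simpa using hA)]
    · intro f hf
      have h0 : aeval (fun A => if A ∈ T then (0 : MvPolynomial σ k) else X A) f = 0 := hf
      have := sub_aeval_mem (k := k) T f
      rwa [h0, sub_zero] at this
  rw [hker]
  exact RingHom.ker_isPrime _

lemma X_mem_varIdeal (T : Finset σ) (A : σ) :
    (X A : MvPolynomial σ k) ∈ varIdeal T ↔ A ∈ T := by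
  constructor
  · intro h
    rw [varIdeal, mem_ideal_span_X_image] at h
    obtain ⟨B, hB, hB2⟩ := h (Finsupp.single A 1) (by simp [support_X])
    obtain rfl : A = B := by
      by_contra hne
      exact hB2 (Finsupp.single_eq_of_ne' hne)
    simpa using hB
  · intro h
    exact Ideal.subset_span ⟨A, by simpa using h, rfl⟩

lemma varIdeal_sq (T : Finset σ) :
    (varIdeal (k := k) T) ^ 2 = Ideal.span ((fun s => monomial s (1:k)) ''
      {s | ∃ A ∈ T, ∃ B ∈ T, s = Finsupp.single A 1 + Finsupp.single B 1}) := by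
  rw [pow_two, varIdeal, Ideal.span_mul_span]
  apply le_antisymm <;> rw [Ideal.span_le]
  · rintro f hf
    simp only [Set.mem_image2, Set.mem_mul] at hf
    obtain ⟨x, hx, y, hy, rfl⟩ := hf
    obtain ⟨A, hA, rfl⟩ := hx
    obtain ⟨B, hB, rfl⟩ := hy
    apply Ideal.subset_span
    exact ⟨_, ⟨A, by simpa using hA, B, by simpa using hB, rfl⟩,
      by simp only [X, monomial_mul, one_mul]⟩
  · rintro f ⟨s, ⟨A, hA, B, hB, rfl⟩, rfl⟩
    apply Ideal.subset_span
    simp only [Set.mem_iUnion, Set.mem_singleton_iff, exists_prop]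
    exact ⟨X A, ⟨A, by simpa using hA, rfl⟩, X B, ⟨B, by simpa using hB, rfl⟩,
      by simp only [X, monomial_mul, one_mul]⟩

lemma mem_varIdeal_sq (T : Finset σ) (d : σ →₀ ℕ) :
    (monomial d (1:k)) ∈ (varIdeal (k := k) T) ^ 2 ↔ 2 ≤ ∑ A ∈ T, d A := by
  classical
  rw [varIdeal_sq, mem_ideal_span_monomial_image]
  simp only [support_monomial, if_neg (one_ne_zero (α := k)), Finset.mem_singleton,
    forall_eq]
  constructor
  · rintro ⟨_, ⟨A, hA, B, hB, rfl⟩, hle⟩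
    rcases eq_or_ne A B with rfl | hne
    · have h2 : 2 ≤ d A := by
        have := hle A
        simpa using this
      calc 2 ≤ d A := h2
        _ ≤ ∑ A ∈ T, d A := Finset.single_le_sum (fun _ _ => Nat.zero_le _) hA
    · have h1 : 1 ≤ d A := by
        have := hle A
        simpa [Finsupp.single_apply, hne.symm] using this
      have h2 : 1 ≤ d B := by
        have := hle B
        simpa [Finsupp.single_apply, hne] using this
      calc 2 = 1 + 1 := rfl
        _ ≤ d A + d B := Nat.add_le_add h1 h2
        _ = ∑ C ∈ {A, B}, d C := (Finset.sum_pair hne).symm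
        _ ≤ ∑ A ∈ T, d A := Finset.sum_le_sum_of_subset (by
            intro x hx
            simp only [Finset.mem_insert, Finset.mem_singleton] at hx
            rcases hx with rfl | rfl <;> assumption)
  · intro hsum
    by_cases hbig : ∃ A ∈ T, 2 ≤ d A
    · obtain ⟨A, hA, h2⟩ := hbig
      refine ⟨_, ⟨A, hA, A, hA, rfl⟩, ?_⟩
      intro x
      rcases eq_or_ne x A with rfl | hne
      · simpa using h2
      · simp [Finsupp.single_apply, hne.symm]
    · push_neg at hbig
      set U := T.filter (fun A => d A ≠ 0) with hU
      have hsum2 : ∑ A ∈ U, d A = ∑ A ∈ T, d A := Finset.sum_filter_ne_zero T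
      have hcardsum : ∑ A ∈ U, d A ≤ U.card * 1 := by
        apply Finset.sum_le_card_nsmul
        intro A hA
        have := hbig A (Finset.mem_filter.mp hA).1
        omega
      have hcard : 1 < U.card := by omega
      obtain ⟨A, hA, B, hB, hne⟩ := Finset.one_lt_card.mp hcard
      have hAd : 1 ≤ d A := Nat.one_le_iff_ne_zero.mpr (Finset.mem_filter.mp hA).2
      have hBd : 1 ≤ d B := Nat.one_le_iff_ne_zero.mpr (Finset.mem_filter.mp hB).2
      refine ⟨_, ⟨A, (Finset.mem_filter.mp hA).1, B, (Finset.mem_filter.mp hB).1, rfl⟩, ?_⟩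
      intro x
      simp only [Finsupp.coe_add, Pi.add_apply, Finsupp.single_apply]
      split_ifs with h1 h2 h2
      · exact absurd (h1.trans h2.symm) hne
      · subst h1; simpa using hAd
      · subst h2; simpa using hBd
      · simp

end Aux

section Main

variable {k : Type*} [Field k] {q : ℕ}

lemma ymonF_eq (b : Finset (Fin q) → ℕ) :
    ymonF k q b = monomial (Finsupp.equivFunOnFinite.symm (fun A : EIdx q => b A.1)) 1 := by
  classical
  set d : EIdx q →₀ ℕ := Finsupp.equivFunOnFinite.symm (fun A : EIdx q => b A.1) with hd
  have hdA : ∀ A : EIdx q, d A = b A.1 := fun A => rfl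
  rw [ymonF, ← prod_X_pow_eq_monomial]
  rw [show (∏ A : EIdx q, (X A : MvPolynomial (EIdx q) k) ^ b A.1)
      = ∏ A : EIdx q, (X A : MvPolynomial (EIdx q) k) ^ d A from
    Finset.prod_congr rfl (fun A _ => by rw [hdA])]
  exact (Finset.prod_subset (Finset.subset_univ d.support) (by
    intro x _ hx
    rw [Finsupp.notMem_support_iff.mp hx, pow_zero])).symm

lemma extIdeal_le_varIdeal (T : Finset (EIdx q)) (hcov : ∀ i : Fin q, ∃ A ∈ T, i ∈ A.1) :
    extIdeal k q ≤ varIdeal T := by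
  rw [extIdeal, Ideal.span_le]
  rintro _ ⟨i, rfl⟩
  obtain ⟨A, hAT, hiA⟩ := hcov i
  have hdvd : (X A : MvPolynomial (EIdx q) k) ∣ extGen k q i := by
    have := Finset.dvd_prod_of_mem
      (fun A : EIdx q => if i ∈ A.1 then (X A : MvPolynomial (EIdx q) k) else 1)
      (Finset.mem_univ A)
    rw [extGen]
    simpa only [if_pos hiA] using this
  obtain ⟨c, hc⟩ := hdvd
  rw [SetLike.mem_coe, hc]
  exact Ideal.mul_mem_right _ _ (Ideal.subset_span ⟨A, by simpa using hAT, rfl⟩)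

lemma minPrime_eq (P : Ideal (MvPolynomial (EIdx q) k))
    (hP : P ∈ (extIdeal k q).minimalPrimes) :
    ∃ T : Finset (EIdx q), P = varIdeal T ∧ ∀ i : Fin q, ∃ A ∈ T, i ∈ A.1 := by
  classical
  obtain ⟨⟨hprime, hle⟩, hmin⟩ := hP
  set T := Finset.univ.filter (fun A : EIdx q => X A ∈ P) with hT
  have hcov : ∀ i : Fin q, ∃ A ∈ T, i ∈ A.1 := by
    intro i
    have hgen : extGen k q i ∈ P := hle (Ideal.subset_span ⟨i, rfl⟩)
    rw [extGen] at hgen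
    haveI := hprime
    rw [Ideal.IsPrime.prod_mem_iff] at hgen
    obtain ⟨A, -, hA⟩ := hgen
    by_cases hi : i ∈ A.1
    · exact ⟨A, Finset.mem_filter.mpr ⟨Finset.mem_univ _, by rwa [if_pos hi] at hA⟩, hi⟩
    · rw [if_neg hi] at hA
      exact absurd ((Ideal.eq_top_iff_one P).mpr hA) hprime.ne_top
  have hsub : varIdeal T ≤ P := by
    rw [varIdeal, Ideal.span_le]
    rintro _ ⟨A, hA, rfl⟩
    have : A ∈ T := by simpa using hA
    exact (Finset.mem_filter.mp this).2
  have hEle : extIdeal k q ≤ varIdeal T := extIdeal_le_varIdeal T hcov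
  have hPle : P ≤ varIdeal T := hmin ⟨varIdeal_isPrime T, hEle⟩ hsub
  exact ⟨T, le_antisymm hPle hsub, hcov⟩

lemma mem_symbPow {R : Type*} [CommRing R] {I : Ideal R} {r : ℕ} {f : R} :
    f ∈ symbPow I r ↔ ∀ P ∈ I.minimalPrimes, f ∈ P ^ r := by
  simp [symbPow, Submodule.mem_iInf]

end Main

theorem stmt16 (k : Type*) [Field k] (q : ℕ) (hq : 1 ≤ q)
    (b : Finset (Fin q) → ℕ)
    -- `y^b` is a minimal monomial generator of `E_q^{(2)}`:
    (hmem : ymonF k q b ∈ symbPow (extIdeal k q) 2)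
    (hminimal : ∀ A : EIdx q, 0 < b A.1 →
      ymonF k q (fun B => if B = A.1 then b B - 1 else b B) ∉
        symbPow (extIdeal k q) 2) :
    -- `D = {A : A nonempty, b_A = 0}` is closed under unions …
    (∀ A₁ A₂ : Finset (Fin q), A₁.Nonempty → b A₁ = 0 → A₂.Nonempty → b A₂ = 0 →
      b (A₁ ∪ A₂) = 0) ∧
    -- … in particular, if `D` is nonempty it has a maximum element
    ((∃ A : Finset (Fin q), A.Nonempty ∧ b A = 0) →
      ∃ M : Finset (Fin q), (M.Nonempty ∧ b M = 0) ∧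
        ∀ A : Finset (Fin q), A.Nonempty → b A = 0 → A ⊆ M) := by
  classical
  have hcoe : ∀ (f : EIdx q → ℕ) (A : EIdx q),
      (Finsupp.equivFunOnFinite.symm f) A = f A := fun _ _ => rfl
  have hsum : ∀ Q ∈ (extIdeal k q).minimalPrimes, ∀ U : Finset (EIdx q),
      Q = varIdeal U → 2 ≤ ∑ A ∈ U, b A.1 := by
    intro Q hQ U hEq
    have h := (mem_symbPow.mp hmem) Q hQ
    rw [hEq, ymonF_eq, mem_varIdeal_sq] at h
    simpa [hcoe] using h
  have hclosed : ∀ A₁ A₂ : Finset (Fin q), A₁.Nonempty → b A₁ = 0 → A₂.Nonempty →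
      b A₂ = 0 → b (A₁ ∪ A₂) = 0 := by
    intro A₁ A₂ h1 hb1 h2 hb2
    by_contra hc
    set A₀ : EIdx q := ⟨A₁ ∪ A₂, h1.mono Finset.subset_union_left⟩ with hA₀
    refine hminimal A₀ (Nat.pos_of_ne_zero hc) ?_
    rw [mem_symbPow]
    intro P hP
    obtain ⟨T, rfl, hcov⟩ := minPrime_eq P hP
    rw [ymonF_eq, mem_varIdeal_sq]
    simp only [hcoe]
    show 2 ≤ ∑ A ∈ T, (if (A : Finset (Fin q)) = (A₀ : Finset (Fin q)) then b A.1 - 1 else b A.1)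
    by_cases hA0 : A₀ ∈ T
    · -- replace A₀ by A₁ and A₂ in the cover T
      set A1i : EIdx q := ⟨A₁, h1⟩ with hA1i
      set A2i : EIdx q := ⟨A₂, h2⟩ with hA2i
      set T' : Finset (EIdx q) := insert A1i (insert A2i (T.erase A₀)) with hT'
      have hcov' : ∀ i : Fin q, ∃ A ∈ T', i ∈ A.1 := by
        intro i
        obtain ⟨A, hAT, hiA⟩ := hcov i
        by_cases hAA : A = A₀
        · subst hAA
          rcases Finset.mem_union.mp (hiA : i ∈ A₁ ∪ A₂) with h | h
          · exact ⟨A1i, by simp [hT'], h⟩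
          · exact ⟨A2i, by simp [hT'], h⟩
        · exact ⟨A, by simp [hT', Finset.mem_erase, hAA, hAT], hiA⟩
      have hEle : extIdeal k q ≤ varIdeal (k := k) T' := extIdeal_le_varIdeal T' hcov'
      haveI : (varIdeal (k := k) T').IsPrime := varIdeal_isPrime T'
      obtain ⟨Q, hQmin, hQle⟩ := Ideal.exists_minimalPrimes_le hEle
      obtain ⟨U, rfl, -⟩ := minPrime_eq Q hQmin
      have hUsub : U ⊆ T' := by
        intro A hA
        have hX : (X A : MvPolynomial (EIdx q) k) ∈ varIdeal T' :=
          hQle ((X_mem_varIdeal U A).mpr hA)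
        exact (X_mem_varIdeal T' A).mp hX
      have h2' : 2 ≤ ∑ A ∈ U, b A.1 := hsum _ hQmin U rfl
      have h3 : 2 ≤ ∑ A ∈ T', b A.1 :=
        le_trans h2' (Finset.sum_le_sum_of_subset hUsub)
      have h4 : ∑ A ∈ T', b A.1 ≤ ∑ A ∈ T.erase A₀, b A.1 := by
        apply Finset.sum_le_sum_of_ne_zero
        intro A hAT' hAne
        have hA1 : A ≠ A1i := by
          intro h; apply hAne; rw [h, hA1i]; exact hb1
        have hA2 : A ≠ A2i := by
          intro h; apply hAne; rw [h, hA2i]; exact hb2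
        simp only [hT', Finset.mem_insert] at hAT'
        rcases hAT' with h | h | h
        · exact absurd h hA1
        · exact absurd h hA2
        · exact h
      have h5 : ∑ A ∈ T.erase A₀, b A.1
          = ∑ A ∈ T.erase A₀, (if A.1 = A₀.1 then b A.1 - 1 else b A.1) := by
        apply Finset.sum_congr rfl
        intro A hA
        have hne : A ≠ A₀ := (Finset.mem_erase.mp hA).1
        rw [if_neg (fun h => hne (Subtype.ext h))]
      calc 2 ≤ ∑ A ∈ T.erase A₀, b A.1 := le_trans h3 h4
        _ = ∑ A ∈ T.erase A₀, (if A.1 = A₀.1 then b A.1 - 1 else b A.1) := h5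
        _ ≤ ∑ A ∈ T, (if A.1 = A₀.1 then b A.1 - 1 else b A.1) :=
            Finset.sum_le_sum_of_subset (Finset.erase_subset _ _)
    · have h2' : 2 ≤ ∑ A ∈ T, b A.1 := hsum _ hP T rfl
      have h5 : ∑ A ∈ T, (if A.1 = A₀.1 then b A.1 - 1 else b A.1)
          = ∑ A ∈ T, b A.1 := by
        apply Finset.sum_congr rfl
        intro A hA
        have hne : A ≠ A₀ := fun h => hA0 (h ▸ hA)
        rw [if_neg (fun h => hne (Subtype.ext h))]
      omega
  refine ⟨hclosed, ?_⟩
  rintro ⟨A, hAne, hA0⟩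
  set F : Finset (Finset (Fin q)) :=
    Finset.univ.filter (fun B : Finset (Fin q) => B.Nonempty ∧ b B = 0) with hF
  have hkey : ∀ t : Finset (Finset (Fin q)), t.Nonempty →
      (∀ B ∈ t, B.Nonempty ∧ b B = 0) → ((t.sup id).Nonempty ∧ b (t.sup id) = 0) := by
    intro t
    refine fun ht => Finset.Nonempty.cons_induction ?_ ?_ ht
    · intro a ha
      simpa using ha a (by simp)
    · intro a s hanotin hs ih hall
      have h1 := hall a (by simp)
      have h2 := ih (fun B hB => hall B (by simp [hB]))
      have hsup : (Finset.cons a s hanotin).sup id = a ∪ s.sup id := by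
        simp [Finset.sup_cons, Finset.sup_eq_union]
      rw [hsup]
      exact ⟨h1.1.mono Finset.subset_union_left,
        hclosed a (s.sup id) h1.1 h1.2 h2.1 h2.2⟩
  have hFne : F.Nonempty := ⟨A, by simp [hF, hAne, hA0]⟩
  have hFall : ∀ B ∈ F, B.Nonempty ∧ b B = 0 := by
    intro B hB
    simpa [hF] using hB
  refine ⟨F.sup id, hkey F hFne hFall, ?_⟩
  intro B hBne hB0
  have hBF : B ∈ F := by
    rw [hF, Finset.mem_filter]
    exact ⟨Finset.mem_univ _, hBne, hB0⟩
  exact Finset.le_sup (f := id) hBF
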